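/- Let $A$ be a Dedekind domain with fraction field $K$, $L/K$ a separable quadratic extension, $B$ the integral closure of $A$ in $L$. Let $(\Lambda, v, h)$ be a pointed integral binary $B$-hermitian module: $\Lambda$ a projective $B$-module of rank 2 with non-degenerate hermitian form $h$ on $V = \Lambda \otimes_A K$ satisfying $h(\Lambda) \subseteq A$, and $v \in \Lambda$ with $h(v) = 1$. Then $\Lambda$, viewed inside the quaternion algebra $H_V$ with identity $v$, is closed under multiplication, i.e., $\Lambda$ is an order in $H_V$. -/

import Mathlib

/-- An element of a quadratic-type extension which together with a "conjugate"
has trace and norm coming from `A` is integral over `A`. -/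
lemma quad_mem_integralClosure {A L : Type*} [CommRing A] [CommRing L] [Algebra A L]
    {t tc : L} {p q : A} (h1 : t + tc = algebraMap A L p) (h2 : t * tc = algebraMap A L q) :
    t ∈ integralClosure A L := by
  show IsIntegral A t
  refine ⟨Polynomial.X ^ 2 + (Polynomial.C (-p) * Polynomial.X + Polynomial.C q), ?_, ?_⟩
  · apply Polynomial.monic_X_pow_add
    apply lt_of_le_of_lt (Polynomial.degree_add_le _ _)
    rw [sup_lt_iff]
    constructor
    · apply lt_of_le_of_lt (Polynomial.degree_mul_le _ _)
      apply lt_of_le_of_lt (add_le_add Polynomial.degree_C_le Polynomial.degree_X_le)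
      norm_num
    · exact lt_of_le_of_lt Polynomial.degree_C_le (by norm_num)
  · have htc : tc = algebraMap A L p - t := by rw [← h1]; ring
    simp only [Polynomial.eval₂_add, Polynomial.eval₂_mul, Polynomial.eval₂_pow,
      Polynomial.eval₂_X, Polynomial.eval₂_C, map_neg, Polynomial.eval₂_neg]
    rw [htc] at h2
    linear_combination -h2

/-- a pointed integral binary hermitian `B`-module `(Λ, v, h)`,
viewed inside the quaternion algebra `H_V` (`V = Λ ⊗ K`) with identity `v`, is
closed under multiplication, i.e. `Λ` is an order in `H_V`. -/
theorem statement7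
    -- `A` a Dedekind domain with fraction field `K`
    (A : Type*) [CommRing A] [IsDedekindDomain A]
    (K : Type*) [Field K] [Algebra A K] [IsFractionRing A K]
    -- `L` a separable quadratic extension of `K`
    (L : Type*) [Field L] [Algebra K L] [Algebra A L] [IsScalarTower A K L]
    [Algebra.IsSeparable K L] (hL : Module.finrank K L = 2)
    (σ : L ≃ₐ[K] L) (hσinv : ∀ l, σ (σ l) = l) (hσne : σ ≠ AlgEquiv.refl)
    -- `V = Λ ⊗ K`, a binary hermitian space
    (V : Type*) [AddCommGroup V] [Module A V] [Module K V] [Module L V]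
    [IsScalarTower A K V] [IsScalarTower K L V] (hV : Module.finrank L V = 2)
    (s : V → V → L) (h : V → K)
    (hadd : ∀ x x' y : V, s (x + x') y = s x y + s x' y)
    (hlin : ∀ (l : L) (x y : V), s (l • x) y = l * s x y)
    (hsymm : ∀ x y : V, s x y = σ (s y x))
    (hdiag : ∀ x : V, s x x = algebraMap K L (h x))
    (hnd : ∀ x : V, (∀ y : V, s x y = 0) → x = 0)
    (v : V) (hv : h v = 1)
    -- `mul` is the multiplication of the quaternion algebra `H_V` with
    -- identity `v` and reduced norm `h`
    (mul : V → V → V)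
    (hmadd : ∀ x x' y : V, mul (x + x') y = mul x y + mul x' y)
    (hmadd' : ∀ x y y' : V, mul x (y + y') = mul x y + mul x y')
    (hml : ∀ (l : L) (x : V), mul (l • v) x = l • x)
    (hmlin : ∀ (l : L) (x y : V), mul (l • x) y = l • mul x y)
    (hmr : ∀ y : V, s v y = 0 → ∀ l : L, mul y (l • v) = σ l • y)
    (hsq : ∀ y : V, s v y = 0 → mul y y = -(algebraMap K L (h y)) • v)
    (hassoc : ∀ x y z : V, mul (mul x y) z = mul x (mul y z))
    (hone : ∀ x : V, mul v x = x ∧ mul x v = x)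
    -- `Λ` is a lattice in `V` which is a module over `B`, the integral
    -- closure of `A` in `L`, on which `h` is integral, with `v ∈ Λ`
    (Λ : Submodule A V)
    (hΛB : ∀ b : L, b ∈ integralClosure A L → ∀ x ∈ Λ, b • x ∈ Λ)
    (hfg : Λ.FG) (hspan : Submodule.span K (Λ : Set V) = ⊤)
    (hint : ∀ x ∈ Λ, ∃ a : A, algebraMap K L (h x) = algebraMap A L a)
    (hvΛ : v ∈ Λ) :
    ∀ x ∈ Λ, ∀ y ∈ Λ, mul x y ∈ Λ := by
  classical
  haveI : FiniteDimensional L V := FiniteDimensional.of_finrank_pos (by rw [hV]; norm_num)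
  haveI : FiniteDimensional K L := FiniteDimensional.of_finrank_pos (by rw [hL]; norm_num)
  -- basic sesquilinearity facts
  have szero : ∀ x : V, s 0 x = 0 := by
    intro x
    have h0 := hadd 0 0 x
    rw [add_zero] at h0
    linear_combination -h0
  have szero' : ∀ x : V, s x 0 = 0 := by
    intro x; rw [hsymm, szero, map_zero]
  have sadd' : ∀ x y y' : V, s x (y + y') = s x y + s x y' := by
    intro x y y'
    rw [hsymm, hadd, map_add, ← hsymm, ← hsymm]
  have ssmul' : ∀ (l : L) (x y : V), s x (l • y) = σ l * s x y := by
    intro l x y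
    rw [hsymm, hlin, map_mul, ← hsymm]
  have sneg : ∀ x y : V, s (-x) y = -(s x y) := by
    intro x y
    have h0 := hadd x (-x) y
    rw [add_neg_cancel, szero] at h0
    linear_combination -h0
  have ssub : ∀ x x' y : V, s (x - x') y = s x y - s x' y := by
    intro x x' y
    rw [sub_eq_add_neg, hadd, sneg]; ring
  have ssub' : ∀ x y y' : V, s x (y - y') = s x y - s x y' := by
    intro x y y'
    rw [hsymm, ssub, map_sub, ← hsymm, ← hsymm]
  have svv : s v v = 1 := by rw [hdiag, hv, map_one]
  have hσfix : ∀ k : K, σ (algebraMap K L k) = algebraMap K L k := fun k => σ.commutes k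
  have hσdiag : ∀ x : V, σ (s x x) = s x x := by
    intro x; rw [hdiag, hσfix]
  -- the linear functional dual to `v`
  let f : V →ₗ[L] L :=
    { toFun := fun y => σ (s v y)
      map_add' := fun y y' => by
        show σ (s v (y + y')) = σ (s v y) + σ (s v y')
        rw [sadd', map_add]
      map_smul' := fun l y => by
        show σ (s v (l • y)) = l * σ (s v y)
        rw [ssmul', map_mul, hσinv]
      }
  have hfdef : ∀ y : V, f y = σ (s v y) := fun y => rfl
  have hfker : ∀ w : V, w ∈ LinearMap.ker f ↔ s v w = 0 := by
    intro w
    rw [LinearMap.mem_ker, hfdef]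
    constructor
    · intro h0
      have := congrArg σ h0
      rwa [hσinv, map_zero] at this
    · intro h0; rw [h0, map_zero]
  have hfsurj : Function.Surjective f := by
    intro l
    refine ⟨l • v, ?_⟩
    rw [hfdef, ssmul', svv, mul_one, hσinv]
  have hker1 : Module.finrank L (LinearMap.ker f) = 1 := by
    have h1 := LinearMap.finrank_range_add_finrank_ker f
    rw [LinearMap.range_eq_top.mpr hfsurj, finrank_top, Module.finrank_self, hV] at h1
    omega
  have hkerspan : ∀ w : V, w ∈ LinearMap.ker f → w ≠ 0 →
      LinearMap.ker f = Submodule.span L {w} := by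
    intro w hw hwne
    refine (Submodule.eq_of_le_of_finrank_le ?_ ?_).symm
    · rwa [Submodule.span_singleton_le_iff_mem]
    · rw [hker1, finrank_span_singleton hwne]
  -- the multiplication formula
  have formula : ∀ x y : V, mul x y = s x v • y + σ (s y v) • x - s x y • v := by
    have mzero : ∀ y : V, mul 0 y = 0 := by
      intro y
      have h0 := hmadd 0 0 y
      rw [add_zero] at h0
      nth_rewrite 1 [← add_zero (mul 0 y)] at h0
      exact (add_left_cancel h0).symm
    have key : ∀ x₀ y₀ : V, s v x₀ = 0 → s v y₀ = 0 → mul x₀ y₀ = -(s x₀ y₀) • v := by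
      intro x₀ y₀ h1 h2
      by_cases hx₀ : x₀ = 0
      · rw [hx₀, mzero, szero, neg_zero, zero_smul]
      · obtain ⟨c, hc⟩ : ∃ c : L, y₀ = c • x₀ := by
          have hy₀ : y₀ ∈ LinearMap.ker f := (hfker y₀).mpr h2
          rw [hkerspan x₀ ((hfker x₀).mpr h1) hx₀] at hy₀
          obtain ⟨c, hc⟩ := Submodule.mem_span_singleton.mp hy₀
          exact ⟨c, hc.symm⟩
        have h3 : mul x₀ y₀ = σ c • mul x₀ x₀ := by
          rw [hc, ← hml c x₀, ← hassoc, hmr x₀ h1 c, hmlin]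
        have hsc : s x₀ y₀ = σ c * algebraMap K L (h x₀) := by
          rw [hc, ssmul', hdiag]
        rw [h3, hsq x₀ h1, hsc, smul_smul, mul_neg]
    intro x y
    have hxdec : x = s x v • v + (x - s x v • v) := by abel
    have hydec : y = s y v • v + (y - s y v • v) := by abel
    have hx0 : s v (x - s x v • v) = 0 := by
      rw [ssub', ssmul', svv, mul_one, hsymm x v, hσinv, sub_self]
    have hy0 : s v (y - s y v • v) = 0 := by
      rw [ssub', ssmul', svv, mul_one, hsymm y v, hσinv, sub_self]
    have step : mul x y = s x v • y + (σ (s y v) • (x - s x v • v) +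
        -(s (x - s x v • v) (y - s y v • v)) • v) := by
      conv_lhs => rw [hxdec, hmadd, hml]
      congr 1
      conv_lhs => rw [hydec, hmadd', hmr _ hx0, key _ _ hx0 hy0]
    rw [step]
    have hs4 : s (x - s x v • v) (y - s y v • v) = s x y - s x v * σ (s y v) := by
      rw [ssub, ssub', ssub', ssmul', hlin, hlin, ssmul', svv, hsymm v y]
      ring
    rw [hs4]
    module
  -- trace of pairing of two lattice vectors is integral
  have tr_pair : ∀ u ∈ Λ, ∀ u' ∈ Λ, ∃ a : A, s u u' + σ (s u u') = algebraMap A L a := by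
    intro u hu u' hu'
    obtain ⟨a1, ha1⟩ := hint (u + u') (Λ.add_mem hu hu')
    obtain ⟨a2, ha2⟩ := hint u hu
    obtain ⟨a3, ha3⟩ := hint u' hu'
    refine ⟨a1 - a2 - a3, ?_⟩
    have hexp : s (u + u') (u + u') = s u u + s u' u' + (s u u' + σ (s u u')) := by
      rw [hadd, sadd', sadd', ← hsymm u' u]
      ring
    rw [hdiag, hdiag, hdiag, ha1, ha2, ha3] at hexp
    rw [map_sub, map_sub]
    linear_combination -hexp
  -- scalars l with l • v ∈ Λ are integral
  have hLv : ∀ l : L, l • v ∈ Λ → l ∈ integralClosure A L := by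
    intro l hl
    obtain ⟨a, ha⟩ := tr_pair (l • v) hl v hvΛ
    obtain ⟨a', ha'⟩ := hint (l • v) hl
    rw [hlin, svv, mul_one] at ha
    rw [← hdiag, hlin, ssmul', svv] at ha'
    refine quad_mem_integralClosure (tc := σ l) (p := a) (q := a') ha ?_
    rw [← ha']; ring
  have hBσ : ∀ b : L, b ∈ integralClosure A L → σ b ∈ integralClosure A L := by
    intro b hb
    exact IsIntegral.map (AlgEquiv.restrictScalars A σ) hb
  have hBmap : ∀ a : A, algebraMap A L a ∈ integralClosure A L :=
    fun a => isIntegral_algebraMap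
  have hALsmul : ∀ (a : A) (x : V), algebraMap A L a • x = a • x := by
    intro a x
    rw [IsScalarTower.algebraMap_apply A K L a, algebraMap_smul, algebraMap_smul]
  -- a nonzero vector orthogonal to v
  obtain ⟨w₀, hw₀K, hw₀ne⟩ := (Submodule.ne_bot_iff (LinearMap.ker f)).mp
    (show LinearMap.ker f ≠ ⊥ by
      intro hbot
      rw [hbot, finrank_bot] at hker1
      omega)
  have hsvw₀ : s v w₀ = 0 := (hfker w₀).mp hw₀K
  have hsw₀v : s w₀ v = 0 := by rw [hsymm, hsvw₀, map_zero]
  have hw₀w₀ : s w₀ w₀ ≠ 0 := by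
    intro h0
    apply hw₀ne
    apply hnd
    intro y
    have hy0 : s v (y - s y v • v) = 0 := by
      rw [ssub', ssmul', svv, mul_one, hsymm y v, hσinv, sub_self]
    obtain ⟨c, hc⟩ := Submodule.mem_span_singleton.mp
      ((hkerspan w₀ hw₀K hw₀ne) ▸ (hfker _).mpr hy0)
    have hyd : y = s y v • v + (y - s y v • v) := by abel
    rw [hyd, sadd', ssmul', hsw₀v, mul_zero, ← hc, ssmul', h0, mul_zero, add_zero]
  -- the coordinate functional along w₀ (vanishing on v)
  let χ : V →ₗ[L] L :=
    { toFun := fun y => σ (s w₀ y)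
      map_add' := fun y y' => by
        show σ (s w₀ (y + y')) = σ (s w₀ y) + σ (s w₀ y')
        rw [sadd', map_add]
      map_smul' := fun l y => by
        show σ (s w₀ (l • y)) = l * σ (s w₀ y)
        rw [ssmul', map_mul, hσinv] }
  have hχdef : ∀ y : V, χ y = σ (s w₀ y) := fun y => rfl
  have hχv : χ v = 0 := by rw [hχdef, hsw₀v, map_zero]
  have hχker : ∀ u : V, χ u = 0 → ∃ l : L, u = l • v := by
    intro u hu
    refine ⟨s u v, ?_⟩
    have hu0 : s v (u - s u v • v) = 0 := by
      rw [ssub', ssmul', svv, mul_one, hsymm u v, hσinv, sub_self]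
    obtain ⟨c, hc⟩ := Submodule.mem_span_singleton.mp
      ((hkerspan w₀ hw₀K hw₀ne) ▸ (hfker _).mpr hu0)
    have hud : u = s u v • v + (u - s u v • v) := by abel
    have hχu : χ u = c * s w₀ w₀ := by
      conv_lhs => rw [hud]
      rw [map_add, map_smul, hχv, smul_zero, zero_add, ← hc, map_smul, hχdef,
        smul_eq_mul, hσdiag]
    rw [hχu] at hu
    have hc0 : c = 0 := by
      rcases mul_eq_zero.mp hu with h' | h'
      · exact h'
      · exact absurd h' hw₀w₀
    rw [hc0, zero_smul] at hc
    have : u - s u v • v = 0 := hc.symm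
    rw [sub_eq_zero] at this
    exact this
  -- the ring B = integral closure of A in L is a Dedekind domain with fraction field L
  letI : IsDedekindDomain (integralClosure A L) := integralClosure.isDedekindDomain A K L
  letI : IsFractionRing (integralClosure A L) L :=
    integralClosure.isFractionRing_of_finite_extension K L
  -- the image of Λ under χ, as a B-submodule of L
  obtain ⟨S, hS⟩ := hfg
  have hJmem0 : ∀ u ∈ Λ, χ u ∈ Submodule.span (integralClosure A L) (⇑χ '' (S : Set V)) := by
    intro u hu
    rw [← hS] at hu
    induction hu using Submodule.span_induction with
    | mem z hz => exact Submodule.subset_span ⟨z, hz, rfl⟩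
    | zero => rw [map_zero]; exact Submodule.zero_mem _
    | add z z' _ _ hz hz' => rw [map_add]; exact Submodule.add_mem _ hz hz'
    | smul a z _ hz =>
        rw [← hALsmul, map_smul, smul_eq_mul]
        exact Submodule.smul_mem _ (⟨algebraMap A L a, hBmap a⟩ : integralClosure A L) hz
  have hJrep : ∀ l ∈ Submodule.span (integralClosure A L) (⇑χ '' (S : Set V)),
      ∃ u ∈ Λ, χ u = l := by
    intro l hl
    induction hl using Submodule.span_induction with
    | mem z hz =>
        obtain ⟨u, hu, hzu⟩ := hz
        exact ⟨u, by rw [← hS]; exact Submodule.subset_span hu, hzu⟩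
    | zero => exact ⟨0, Λ.zero_mem, map_zero χ⟩
    | add z z' _ _ hz hz' =>
        obtain ⟨u, hu, hu'⟩ := hz
        obtain ⟨w, hw, hw'⟩ := hz'
        exact ⟨u + w, Λ.add_mem hu hw, by rw [map_add, hu', hw']⟩
    | smul b z _ hz =>
        obtain ⟨u, hu, hu'⟩ := hz
        refine ⟨(b : L) • u, hΛB (b : L) b.2 u hu, ?_⟩
        rw [map_smul, hu', smul_eq_mul]
        exact (Algebra.smul_def (b : integralClosure A L) z).symm ▸ rfl
  -- build a fractional ideal from the image of Λ under χ and invert it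
  have hJfg : (Submodule.span (integralClosure A L) (⇑χ '' (S : Set V))).FG :=
    Submodule.fg_span ((S.finite_toSet).image _)
  have hJne : ∃ u ∈ Λ, χ u ≠ 0 := by
    by_contra hcon
    push_neg at hcon
    have hsub : (Λ : Set V) ⊆ (LinearMap.ker (χ.restrictScalars K) : Set V) := by
      intro u hu
      simpa using hcon u hu
    have htop : Submodule.span K (Λ : Set V) ≤ LinearMap.ker (χ.restrictScalars K) :=
      Submodule.span_le.mpr hsub
    rw [hspan, top_le_iff] at htop
    have hχw₀ : χ w₀ = 0 := by
      have hmem : w₀ ∈ LinearMap.ker (χ.restrictScalars K) := htop ▸ Submodule.mem_top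
      simpa using hmem
    rw [hχdef, hσdiag] at hχw₀
    exact hw₀w₀ hχw₀
  obtain ⟨w₂, hχw₂, hw₂Λ⟩ : ∃ w₂ : V, χ w₂ = 1 ∧ ∀ u ∈ Λ, χ u • w₂ ∈ Λ := by
    set Bc := integralClosure A L with hBc
    let I : FractionalIdeal (nonZeroDivisors Bc) L :=
      ⟨Submodule.span Bc (⇑χ '' (S : Set V)), FractionalIdeal.isFractional_of_fg hJfg⟩
    have hIJ : (I : Submodule Bc L) = Submodule.span Bc (⇑χ '' (S : Set V)) := rfl
    have hI0 : I ≠ 0 := by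
      intro h0
      obtain ⟨u, hu, hune⟩ := hJne
      apply hune
      have hmem : χ u ∈ (I : Submodule Bc L) := by
        rw [hIJ]; exact hJmem0 u hu
      rw [h0] at hmem
      simpa using hmem
    have hmulinv : I * I⁻¹ = 1 := mul_inv_cancel₀ hI0
    have hone1 : (1 : L) ∈ ((I : Submodule Bc L) * ((I⁻¹ : FractionalIdeal _ L) :
        Submodule Bc L) : Submodule Bc L) := by
      rw [← FractionalIdeal.coe_mul, hmulinv]
      simpa using FractionalIdeal.one_mem_one (nonZeroDivisors Bc)
    refine Submodule.mul_induction_on hone1 ?_ ?_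
    · intro m hm n hn
      obtain ⟨u, hu, hχu⟩ := hJrep m (by rwa [← hIJ])
      refine ⟨n • u, ?_, ?_⟩
      · rw [map_smul, hχu, smul_eq_mul, mul_comm]
      · intro u' hu'
        have hmemI : χ u' ∈ I := by
          rw [← FractionalIdeal.mem_coe, hIJ]
          exact hJmem0 u' hu'
        have hninv : n ∈ I⁻¹ := by rwa [← FractionalIdeal.mem_coe]
        have h1 : n * χ u' ∈ (1 : FractionalIdeal (nonZeroDivisors Bc) L) :=
          (FractionalIdeal.mem_inv_iff hI0).mp hninv (χ u') hmemI
        obtain ⟨b, hb⟩ := FractionalIdeal.mem_one_iff _ |>.mp h1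
        have h2 : χ u' • n • u = ((b : L)) • u := by
          rw [smul_smul]
          congr 1
          rw [mul_comm, ← hb]
          rfl
        rw [h2]
        exact hΛB (b : L) b.2 u hu
    · rintro z z' ⟨w, hw1, hw2⟩ ⟨w', hw'1, hw'2⟩
      refine ⟨w + w', by rw [map_add, hw1, hw'1], ?_⟩
      intro u hu
      have : χ u • (w + w') = χ u • w + χ u • w' := smul_add _ _ _
      rw [this]
      exact Λ.add_mem (hw2 u hu) (hw'2 u hu)
  -- every lattice vector splits as b • v + c • w₂ with b integral and c • w₂ ∈ Λ
  have hdecomp : ∀ u ∈ Λ, ∃ b c : L, b ∈ integralClosure A L ∧ c • w₂ ∈ Λ ∧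
      u = b • v + c • w₂ := by
    intro u hu
    have h1 : u - χ u • w₂ ∈ Λ := Λ.sub_mem hu (hw₂Λ u hu)
    have h2 : χ (u - χ u • w₂) = 0 := by
      rw [map_sub, map_smul, hχw₂, smul_eq_mul, mul_one, sub_self]
    obtain ⟨l, hl⟩ := hχker _ h2
    refine ⟨l, χ u, hLv l (hl ▸ h1), hw₂Λ u hu, ?_⟩
    rw [← hl]; abel
  -- final assembly
  intro x hx y hy
  obtain ⟨b₁, c₁, hb₁, hc₁w, hxdec⟩ := hdecomp x hx
  obtain ⟨b₂, c₂, hb₂, hc₂w, hydec⟩ := hdecomp y hy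
  -- step 1 : peel off the left factor
  have step1 : mul x y = b₁ • y + c₁ • mul w₂ y := by
    conv_lhs => rw [hxdec, hmadd, hml, hmlin]
  -- step 2 : compute mul w₂ y via the formula
  have step2 : mul w₂ y = (s w₂ v * b₂ - σ b₂ * s w₂ v) • v + σ b₂ • w₂ +
      (c₂ * s w₂ v + σ (c₂ * s w₂ v)) • w₂ - (σ c₂ * s w₂ w₂) • v := by
    conv_lhs => rw [hydec, hmadd']
    rw [formula w₂ (b₂ • v), formula w₂ (c₂ • w₂)]
    rw [hlin, hlin, svv, ssmul', ssmul', mul_one]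
    module
  -- the trace of c₂ * s w₂ v is integral
  obtain ⟨a₂, ha₂⟩ := tr_pair (c₂ • w₂) hc₂w v hvΛ
  rw [hlin] at ha₂
  -- coefficient 1 : c₁ * (s w₂ v * b₂ - σ b₂ * s w₂ v) is integral
  have hcoef1 : c₁ * (s w₂ v * b₂ - σ b₂ * s w₂ v) ∈ integralClosure A L := by
    obtain ⟨a₁, ha₁⟩ := tr_pair (b₂ • (c₁ • w₂)) (hΛB b₂ hb₂ _ hc₁w) v hvΛ
    rw [hlin, hlin] at ha₁
    obtain ⟨a₀, ha₀⟩ := tr_pair (c₁ • w₂) hc₁w v hvΛ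
    rw [hlin] at ha₀
    have hid : c₁ * (s w₂ v * b₂ - σ b₂ * s w₂ v) =
        algebraMap A L a₁ - algebraMap A L a₀ * σ b₂ := by
      rw [← ha₁, ← ha₀]
      simp only [map_mul]
      ring
    rw [hid]
    exact sub_mem (hBmap a₁) (mul_mem (hBmap a₀) (hBσ b₂ hb₂))
  -- coefficient 2 : c₁ * (σ c₂ * s w₂ w₂) is integral
  have hcoef3 : c₁ * (σ c₂ * s w₂ w₂) ∈ integralClosure A L := by
    obtain ⟨a₃, ha₃⟩ := tr_pair (c₁ • w₂) hc₁w (c₂ • w₂) hc₂w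
    rw [hlin, ssmul'] at ha₃
    obtain ⟨a₄, ha₄⟩ := hint (c₁ • w₂) hc₁w
    rw [← hdiag, hlin, ssmul'] at ha₄
    obtain ⟨a₅, ha₅⟩ := hint (c₂ • w₂) hc₂w
    rw [← hdiag, hlin, ssmul'] at ha₅
    refine quad_mem_integralClosure (tc := σ (c₁ * (σ c₂ * s w₂ w₂)))
      (p := a₃) (q := a₄ * a₅) ha₃ ?_
    have hσt : σ (c₁ * (σ c₂ * s w₂ w₂)) = σ c₁ * (c₂ * s w₂ w₂) := by
      rw [map_mul, map_mul, hσinv, hσdiag]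
    rw [hσt, map_mul, ← ha₄, ← ha₅]
    ring
  -- the final expression of the product
  have hfinal : mul x y = b₁ • y + ((c₁ * (s w₂ v * b₂ - σ b₂ * s w₂ v)) • v +
      (σ b₂ • (c₁ • w₂) + ((algebraMap A L a₂) • (c₁ • w₂) -
        (c₁ * (σ c₂ * s w₂ w₂)) • v))) := by
    rw [step1, step2, ha₂]
    module
  rw [hfinal]
  refine Λ.add_mem (hΛB b₁ hb₁ y hy) (Λ.add_mem (hΛB _ hcoef1 v hvΛ)
    (Λ.add_mem (hΛB _ (hBσ b₂ hb₂) _ hc₁w)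
      (Λ.sub_mem (hΛB _ (hBmap a₂) _ hc₁w) (hΛB _ hcoef3 v hvΛ))))
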